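/- Let K be a field of characteristic p ≥ 0, let e ∈ ℕ with e = 0 whenever p = 0, write q = p^e (with q = 1 when e = 0), let ℓ ≥ 1, and let h ∈ K[x] be monic of degree d ≥ 1. Set f = h(x^q)^ℓ ∈ K[x], which is monic of degree n = d·ℓ·q, and let B = K[θ,z]/⟨h(θ), (z^q − θ)^ℓ⟩. Then there exists a K-algебra homomorphism Ψ : K[x]/⟨f⟩ → B sending the class of x to the class of z. If moreover h is separable, then the minimal polynomial over K of the class of z in B equals f, and Ψ is an isomorphism of K-algebras. -/

import Mathlib

open Polynomial

noncomputable section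

/-- Newton iteration: lifting an approximate root to an exact root. -/
lemma newton_lift {R : Type*} [CommRing R] (h : R[X]) :
    ∀ (m : ℕ) (a : R), h.eval a ^ (2 ^ m) = 0 → IsUnit (h.derivative.eval a) →
      ∃ s, h.eval s = 0 ∧ ∃ c, s = a + h.eval a * c := by
  intro m
  induction m with
  | zero =>
      intro a h0 _
      exact ⟨a, by simpa using h0, 0, by ring⟩
  | succ m ih =>
      intro a h0 hu
      obtain ⟨U, hU⟩ := hu
      set u : R := ((U⁻¹ : Rˣ) : R) with hu_def
      have huu : h.derivative.eval a * u = 1 := by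
        rw [← hU, hu_def, ← Units.val_mul, mul_inv_cancel, Units.val_one]
      obtain ⟨k, hk⟩ := h.binomExpansion a (-(h.eval a * u))
      set b := a + -(h.eval a * u) with hb
      have hHnil : IsNilpotent (h.eval a) := ⟨2 ^ (m + 1), h0⟩
      have hhb : h.eval b = h.eval a ^ 2 * (u ^ 2 * k) := by
        rw [hb, hk]
        linear_combination (-(h.eval a)) * huu
      have hb0 : h.eval b ^ (2 ^ m) = 0 := by
        have h2 : h.eval a ^ (2 * 2 ^ m) = 0 := by
          rw [mul_comm, ← pow_succ]; exact h0
        rw [hhb, mul_pow, ← pow_mul, h2, zero_mul]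
      have hbu : IsUnit (h.derivative.eval b) := by
        obtain ⟨c', hc'⟩ := sub_dvd_eval_sub b a h.derivative
        have hba : IsNilpotent (b - a) := by
          have : b - a = -(h.eval a * u) := by rw [hb]; ring
          rw [this]
          exact ((Commute.all _ u).isNilpotent_mul_right hHnil).neg
        have : h.derivative.eval b = (b - a) * c' + h.derivative.eval a := by
          linear_combination hc'
        rw [this]
        exact (((Commute.all _ c').isNilpotent_mul_right hba).isUnit_add_right_of_commute ⟨U, hU⟩ (Commute.all _ _))
      obtain ⟨s, hs0, c, hsc⟩ := ih b hb0 hbu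
      refine ⟨s, hs0, -u + h.eval a * (u ^ 2 * k) * c, ?_⟩
      rw [hsc, hhb, hb]; ring

/-- Uniqueness of a root near a simple approximate root. -/
lemma root_unique {R : Type*} [CommRing R] (h : R[X]) {s₁ s₂ : R}
    (h1 : h.eval s₁ = 0) (h2 : h.eval s₂ = 0)
    (hu : IsUnit (h.derivative.eval s₁)) (hn : IsNilpotent (s₂ - s₁)) : s₁ = s₂ := by
  obtain ⟨k, hk⟩ := h.binomExpansion s₁ (s₂ - s₁)
  rw [add_sub_cancel, h2, h1, zero_add] at hk
  have hu2 : IsUnit (h.derivative.eval s₁ + k * (s₂ - s₁)) := by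
    have : IsNilpotent (k * (s₂ - s₁)) := (Commute.all k _).isNilpotent_mul_left hn
    exact this.isUnit_add_left_of_commute hu (Commute.all _ _)
  have hz : (h.derivative.eval s₁ + k * (s₂ - s₁)) * (s₂ - s₁) = 0 := by
    linear_combination -hk
  have : s₂ - s₁ = 0 := (hu2.mul_right_eq_zero).mp hz
  exact (sub_eq_zero.mp this).symm

variable (K : Type*) [Field K]

/-- The ideal `⟨h(θ), (z^q − θ)^ℓ⟩` of `K[θ,z]`, where `θ = X 0` and `z = X 1`. -/
abbrev tangleIdeal (q ℓ : ℕ) (h : K[X]) : Ideal (MvPolynomial (Fin 2) K) :=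
  Ideal.span {Polynomial.aeval (MvPolynomial.X 0) h,
    (MvPolynomial.X 1 ^ q - MvPolynomial.X 0) ^ ℓ}

/-- The `K`-algebra `B = K[θ,z]/⟨h(θ), (z^q − θ)^ℓ⟩`. -/
abbrev tangleAlgebra (q ℓ : ℕ) (h : K[X]) : Type _ :=
  MvPolynomial (Fin 2) K ⧸ tangleIdeal K q ℓ h

set_option maxHeartbeats 1600000 in
/-- with `f = h(x^q)^ℓ` (monic of degree `n = d·ℓ·q`), there is a `K`-algebra
homomorphism `K[x]/⟨f⟩ → B` sending the class of `x` to the class of `z`; if `h` is separable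
then the minimal polynomial of the class of `z` in `B` is `f` and such a map is an isomorphism. -/
theorem untangling
    (p e ℓ d : ℕ) [CharP K p] (hp0 : p = 0 → e = 0) (hd : 1 ≤ d) (hl : 1 ≤ ℓ)
    (h : K[X]) (hmon : h.Monic) (hdeg : h.natDegree = d) :
    (h.comp (X ^ p ^ e) ^ ℓ).Monic ∧
    (h.comp (X ^ p ^ e) ^ ℓ).natDegree = d * ℓ * p ^ e ∧
    (∃ Ψ : AdjoinRoot (h.comp (X ^ p ^ e) ^ ℓ) →ₐ[K] tangleAlgebra K (p ^ e) ℓ h,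
      Ψ (AdjoinRoot.root _) = Ideal.Quotient.mk (tangleIdeal K (p ^ e) ℓ h) (MvPolynomial.X 1)) ∧
    (h.Separable →
      minpoly K (Ideal.Quotient.mk (tangleIdeal K (p ^ e) ℓ h) (MvPolynomial.X 1))
          = h.comp (X ^ p ^ e) ^ ℓ ∧
        ∃ Ψ : AdjoinRoot (h.comp (X ^ p ^ e) ^ ℓ) ≃ₐ[K] tangleAlgebra K (p ^ e) ℓ h,
          Ψ (AdjoinRoot.root _)
            = Ideal.Quotient.mk (tangleIdeal K (p ^ e) ℓ h) (MvPolynomial.X 1)) := by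
  classical
  have hq : p ^ e ≠ 0 := by
    rcases CharP.char_is_prime_or_zero K p with hp | hp
    · exact pow_ne_zero e hp.pos.ne'
    · rw [hp, hp0 hp, pow_zero]; exact one_ne_zero
  set q := p ^ e with hqdef
  have hfm : (h.comp (X ^ q) ^ ℓ).Monic :=
    (hmon.comp (monic_X_pow q) (by simpa using hq)).pow ℓ
  have hfd : (h.comp (X ^ q) ^ ℓ).natDegree = d * ℓ * q := by
    rw [natDegree_pow, natDegree_comp, natDegree_X_pow, hdeg]; ring
  set I : Ideal (MvPolynomial (Fin 2) K) := tangleIdeal K q ℓ h with hIdef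
  set mkq : MvPolynomial (Fin 2) K →ₐ[K] (tangleAlgebra K q ℓ h) :=
    Ideal.Quotient.mkₐ K I with hmkq
  set t : tangleAlgebra K q ℓ h := mkq (MvPolynomial.X 0) with htdef
  set w : tangleAlgebra K q ℓ h := mkq (MvPolynomial.X 1) with hwdef
  have hwmk : Ideal.Quotient.mk I (MvPolynomial.X 1) = w := rfl
  -- basic relations in B
  have ht : Polynomial.aeval t h = 0 := by
    rw [htdef, Polynomial.aeval_algHom_apply, hmkq, Ideal.Quotient.mkₐ_eq_mk,
      Ideal.Quotient.eq_zero_iff_mem]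
    exact Ideal.subset_span (Set.mem_insert _ _)
  have hwt : (w ^ q - t) ^ ℓ = 0 := by
    have h1 : (w ^ q - t) ^ ℓ = mkq ((MvPolynomial.X 1 ^ q - MvPolynomial.X 0) ^ ℓ) := by
      rw [map_pow, map_sub, map_pow]
    rw [h1, hmkq, Ideal.Quotient.mkₐ_eq_mk, Ideal.Quotient.eq_zero_iff_mem]
    exact Ideal.subset_span (Set.mem_insert_of_mem _ rfl)
  have hcw : ∃ c, Polynomial.aeval (w ^ q) h = (w ^ q - t) * c := by
    obtain ⟨c, hc⟩ := sub_dvd_eval_sub (w ^ q) t (h.map (algebraMap K (tangleAlgebra K q ℓ h)))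
    simp only [eval_map, ← aeval_def] at hc
    rw [ht, sub_zero] at hc
    exact ⟨c, hc⟩
  have hfw : Polynomial.aeval w (h.comp (X ^ q) ^ ℓ) = 0 := by
    obtain ⟨c, hc⟩ := hcw
    rw [map_pow, aeval_comp, map_pow, aeval_X, hc, mul_pow, hwt, zero_mul]
  refine ⟨hfm, hfd, ⟨AdjoinRoot.liftAlgHom _ (Algebra.ofId K _) w hfw, ?_⟩, ?_⟩
  · rw [hwmk]; exact AdjoinRoot.liftAlgHom_root _ _ _ hfw
  -- separable case
  intro hsep
  set Ψ : AdjoinRoot (h.comp (X ^ q) ^ ℓ) →ₐ[K] tangleAlgebra K q ℓ h :=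
    AdjoinRoot.liftAlgHom _ (Algebra.ofId K _) w hfw with hΨdef
  set x : AdjoinRoot (h.comp (X ^ q) ^ ℓ) := AdjoinRoot.root _ with hxdef
  have hΨroot : Ψ x = w := by rw [hΨdef, hxdef]; exact AdjoinRoot.liftAlgHom_root _ _ _ hfw
  have hx : (Polynomial.aeval (x ^ q) h) ^ ℓ = 0 := by
    have h1 : Polynomial.aeval x (h.comp (X ^ q) ^ ℓ) = 0 := by
      rw [hxdef, AdjoinRoot.aeval_eq, AdjoinRoot.mk_self]
    rwa [map_pow, aeval_comp, map_pow, aeval_X] at h1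
  have hH2 : (Polynomial.aeval (x ^ q) h) ^ (2 ^ ℓ) = 0 := by
    have hle : ℓ ≤ 2 ^ ℓ := Nat.le_of_lt (Nat.lt_two_pow_self (n := ℓ))
    calc (Polynomial.aeval (x ^ q) h) ^ 2 ^ ℓ
        = (Polynomial.aeval (x ^ q) h) ^ ℓ * (Polynomial.aeval (x ^ q) h) ^ (2 ^ ℓ - ℓ) := by
          rw [← pow_add, Nat.add_sub_cancel' hle]
      _ = 0 := by rw [hx, zero_mul]
  have hH'u : IsUnit (Polynomial.aeval (x ^ q) h.derivative) := by
    obtain ⟨uu, vv, huv⟩ := hsep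
    have h1 := congrArg (Polynomial.aeval (x ^ q)) huv
    simp only [map_add, map_mul, map_one] at h1
    have hnil : IsNilpotent (Polynomial.aeval (x ^ q) uu * Polynomial.aeval (x ^ q) h) :=
      (Commute.all _ _).isNilpotent_mul_left ⟨ℓ, hx⟩
    have h2 : Polynomial.aeval (x ^ q) vv * Polynomial.aeval (x ^ q) h.derivative
        = 1 - Polynomial.aeval (x ^ q) uu * Polynomial.aeval (x ^ q) h := by
      linear_combination h1
    have hun := hnil.isUnit_one_sub
    rw [← h2] at hun
    exact isUnit_of_mul_isUnit_right hun
  have hev : ∀ (y : AdjoinRoot (h.comp (X ^ q) ^ ℓ)),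
      (h.map (algebraMap K (AdjoinRoot (h.comp (X ^ q) ^ ℓ)))).eval y = Polynomial.aeval y h := by
    intro y; rw [eval_map, aeval_def]
  have hev' : ∀ (y : AdjoinRoot (h.comp (X ^ q) ^ ℓ)),
      (h.map (algebraMap K (AdjoinRoot (h.comp (X ^ q) ^ ℓ)))).derivative.eval y
      = Polynomial.aeval y h.derivative := by
    intro y; rw [derivative_map, eval_map, aeval_def]
  obtain ⟨s, hs0, c, hsc⟩ :=
    newton_lift (h.map (algebraMap K (AdjoinRoot (h.comp (X ^ q) ^ ℓ)))) ℓ (x ^ q)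
      (by rw [hev]; exact hH2) (by rw [hev']; exact hH'u)
  rw [hev] at hs0
  rw [hev] at hsc
  have hxs : (x ^ q - s) ^ ℓ = 0 := by
    have hd1 : (x ^ q - s) ^ ℓ
        = (-1) ^ ℓ * ((Polynomial.aeval (x ^ q) h) ^ ℓ * c ^ ℓ) := by
      rw [hsc]; ring
    rw [hd1, hx, zero_mul, mul_zero]
  -- the inverse map
  set Φ0 : MvPolynomial (Fin 2) K →ₐ[K] AdjoinRoot (h.comp (X ^ q) ^ ℓ) :=
    MvPolynomial.aeval ![s, x] with hΦ0def
  have hΦ0X0 : Φ0 (MvPolynomial.X 0) = s := by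
    rw [hΦ0def, MvPolynomial.aeval_X]; rfl
  have hΦ0X1 : Φ0 (MvPolynomial.X 1) = x := by
    rw [hΦ0def, MvPolynomial.aeval_X]; rfl
  have hΦ0I : ∀ a ∈ I, Φ0 a = 0 := by
    have hle : I ≤ RingHom.ker Φ0.toRingHom := by
      rw [hIdef, Ideal.span_le]
      rintro g hg
      simp only [Set.mem_insert_iff, Set.mem_singleton_iff] at hg
      rcases hg with rfl | rfl
      · rw [SetLike.mem_coe, RingHom.mem_ker]
        show Φ0 (Polynomial.aeval (MvPolynomial.X 0) h) = 0
        rw [← Polynomial.aeval_algHom_apply, hΦ0X0, hs0]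
      · rw [SetLike.mem_coe, RingHom.mem_ker]
        show Φ0 ((MvPolynomial.X 1 ^ q - MvPolynomial.X 0) ^ ℓ) = 0
        rw [map_pow, map_sub, map_pow, hΦ0X0, hΦ0X1, hxs]
    intro a ha
    exact hle ha
  set Φ : tangleAlgebra K q ℓ h →ₐ[K] AdjoinRoot (h.comp (X ^ q) ^ ℓ) :=
    Ideal.Quotient.liftₐ I Φ0 hΦ0I with hΦdef
  have hΦmk : ∀ g, Φ (mkq g) = Φ0 g := fun g =>
    AlgHom.congr_fun (Ideal.Quotient.liftₐ_comp I Φ0 hΦ0I) g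
  have hleft : Φ.comp Ψ = AlgHom.id K (AdjoinRoot (h.comp (X ^ q) ^ ℓ)) := by
    apply AdjoinRoot.algHom_ext
    rw [AlgHom.comp_apply, AlgHom.id_apply, ← hxdef, hΨroot, hwdef, hΦmk, hΦ0X1]
  -- uniqueness of the root: Ψ s = t
  have hΨs : Ψ s = t := by
    have hevB : ∀ (y : tangleAlgebra K q ℓ h),
        (h.map (algebraMap K (tangleAlgebra K q ℓ h))).eval y = Polynomial.aeval y h := by
      intro y; rw [eval_map, aeval_def]
    have hevB' : ∀ (y : tangleAlgebra K q ℓ h),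
        (h.map (algebraMap K (tangleAlgebra K q ℓ h))).derivative.eval y
        = Polynomial.aeval y h.derivative := by
      intro y; rw [derivative_map, eval_map, aeval_def]
    apply root_unique (h.map (algebraMap K (tangleAlgebra K q ℓ h)))
    · rw [hevB, Polynomial.aeval_algHom_apply, hs0, map_zero]
    · rw [hevB]; exact ht
    · rw [hevB', Polynomial.aeval_algHom_apply]
      refine IsUnit.map Ψ ?_
      obtain ⟨c', hc'⟩ := sub_dvd_eval_sub s (x ^ q)
        ((h.map (algebraMap K (AdjoinRoot (h.comp (X ^ q) ^ ℓ)))).derivative)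
      rw [hev', hev'] at hc'
      have hnil : IsNilpotent (s - x ^ q) := by
        refine ⟨ℓ, ?_⟩
        have h3 : s - x ^ q = Polynomial.aeval (x ^ q) h * c := by rw [hsc]; ring
        rw [h3, mul_pow, hx, zero_mul]
      have heq : Polynomial.aeval s h.derivative
          = (s - x ^ q) * c' + Polynomial.aeval (x ^ q) h.derivative := by
        linear_combination hc'
      rw [heq]
      exact ((Commute.all _ c').isNilpotent_mul_right hnil).isUnit_add_right_of_commute
        hH'u (Commute.all _ _)
    · -- t - Ψ s is nilpotent
      have h1n : IsNilpotent (t - w ^ q) := by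
        refine ⟨ℓ, ?_⟩
        rw [← neg_sub (w ^ q) t,
          show -(w ^ q - t) = (-1 : tangleAlgebra K q ℓ h) * (w ^ q - t) by ring,
          mul_pow, hwt, mul_zero]
      have h2n : IsNilpotent (w ^ q - Ψ s) := by
        refine ⟨ℓ, ?_⟩
        have h3 : (w ^ q - Ψ s) ^ ℓ = Ψ ((x ^ q - s) ^ ℓ) := by
          rw [map_pow, map_sub, map_pow, hΨroot]
        rw [h3, hxs, map_zero]
      have h4 : t - Ψ s = (t - w ^ q) + (w ^ q - Ψ s) := by ring
      rw [h4]
      exact (Commute.all _ _).isNilpotent_add h1n h2n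
  have hright : Ψ.comp Φ = AlgHom.id K (tangleAlgebra K q ℓ h) := by
    apply Ideal.Quotient.algHom_ext
    apply MvPolynomial.algHom_ext
    intro i
    fin_cases i
    · show Ψ (Φ (mkq (MvPolynomial.X 0))) = Ideal.Quotient.mkₐ K I (MvPolynomial.X 0)
      rw [hΦmk, hΦ0X0, hΨs]
    · show Ψ (Φ (mkq (MvPolynomial.X 1))) = Ideal.Quotient.mkₐ K I (MvPolynomial.X 1)
      rw [hΦmk, hΦ0X1, hΨroot]
  set Ψe : AdjoinRoot (h.comp (X ^ q) ^ ℓ) ≃ₐ[K] tangleAlgebra K q ℓ h :=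
    AlgEquiv.ofAlgHom Ψ Φ hright hleft with hΨedef
  have hΨex : Ψe x = w := hΨroot
  have hminx : minpoly K x = h.comp (X ^ q) ^ ℓ := by
    rw [hxdef, AdjoinRoot.minpoly_root hfm.ne_zero, hfm.leadingCoeff, inv_one, map_one, mul_one]
  constructor
  · rw [hwmk, ← hΨex, minpoly.algEquiv_eq, hminx]
  · exact ⟨Ψe, hΨex⟩
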